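/- Let G act properly by isometries on a proper geodesic Gromov hyperbolic space X and suppose its limit set satisfies |ΛG| ≥ 2. Then for every pair of distinct points (ξ, η) in ΛG × ΛG there exists a sequence of elements g_n ∈ G such that g_n o → ξ and g_n⁻¹ o → η, for some (equivalently, any) basepoint o ∈ X. -/

import Mathlib

/-!
STATEMENT 17. Let `G` act properly by isometries on a proper geodesic Gromov hyperbolic space
`X` and suppose its limit set satisfies `|ΛG| ≥ 2`.  Then for every pair of distinct points
`(ξ, η)` in `ΛG × ΛG` there exists a sequence of elements `gₙ ∈ G` such that `gₙ o → ξ` and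
`gₙ⁻¹ o → η`, for any basepoint `o ∈ X`.
-/

open Metric Filter Set Real

noncomputable section

namespace GromovScaffold

variable {X : Type*} [MetricSpace X]

/-- The Gromov product of `x` and `y` seen from `o`. -/
def gprod (o x y : X) : ℝ := (dist x o + dist y o - dist x y) / 2

/-- `X` is `δ`-hyperbolic in the sense of Gromov (four point condition, which for geodesic
spaces is equivalent, up to changing the constant, to the thin triangles condition). -/
def IsGromovHyperbolic (X : Type*) [MetricSpace X] (δ : ℝ) : Prop :=
  ∀ o x y z : X, min (gprod o x z) (gprod o z y) - δ ≤ gprod o x y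

/-- `f` restricted to `s` is a unit-speed geodesic. -/
def IsGeodesicOn (f : ℝ → X) (s : Set ℝ) : Prop :=
  ∀ u ∈ s, ∀ v ∈ s, dist (f u) (f v) = |u - v|

/-- Every pair of points of `X` is joined by a geodesic segment. -/
def GeodesicSpace (X : Type*) [MetricSpace X] : Prop :=
  ∀ x y : X, ∃ f : ℝ → X, f 0 = x ∧ f (dist x y) = y ∧ IsGeodesicOn f (Icc 0 (dist x y))

/-- A geodesic ray in `X` (parametrised by `[0,∞)`; the values for negative times are
irrelevant). -/
structure GeodesicRay (X : Type*) [MetricSpace X] where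
  toFun : ℝ → X
  geodesic : IsGeodesicOn toFun (Ici 0)

/-- Two rays are asymptotic if they stay at bounded distance from each other. -/
def GeodesicRay.Asymp (r₁ r₂ : GeodesicRay X) : Prop :=
  ∃ C : ℝ, ∀ t ≥ (0 : ℝ), dist (r₁.toFun t) (r₂.toFun t) ≤ C

theorem asymp_equivalence (X : Type*) [MetricSpace X] :
    Equivalence (GeodesicRay.Asymp (X := X)) := by
  constructor
  · exact fun r => ⟨0, fun t _ => by simp⟩
  · rintro r₁ r₂ ⟨C, hC⟩
    exact ⟨C, fun t ht => by rw [dist_comm]; exact hC t ht⟩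
  · rintro r₁ r₂ r₃ ⟨C, hC⟩ ⟨D, hD⟩
    exact ⟨C + D, fun t ht =>
      (dist_triangle _ (r₂.toFun t) _).trans (add_le_add (hC t ht) (hD t ht))⟩

/-- The setoid of asymptotic geodesic rays. -/
def raySetoid (X : Type*) [MetricSpace X] : Setoid (GeodesicRay X) :=
  ⟨GeodesicRay.Asymp, asymp_equivalence X⟩

/-- The Gromov boundary of `X`: asymptotic classes of geodesic rays. -/
def GromovBoundary (X : Type*) [MetricSpace X] := Quotient (raySetoid X)

/-- The boundary point determined by a ray. -/
def GeodesicRay.pt (r : GeodesicRay X) : GromovBoundary X := Quotient.mk (raySetoid X) r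

/-- The image of a geodesic ray under an isometry. -/
def rayMap (g : X ≃ᵢ X) (r : GeodesicRay X) : GeodesicRay X :=
  ⟨fun t => g (r.toFun t), fun u hu v hv => by
    rw [g.dist_eq]; exact r.geodesic u hu v hv⟩

/-- The induced action of an isometry on the Gromov boundary. -/
def bmap (g : X ≃ᵢ X) : GromovBoundary X → GromovBoundary X :=
  Quotient.map (rayMap g) (by
    rintro r₁ r₂ ⟨C, hC⟩
    exact ⟨C, fun t ht => by simpa [rayMap, g.dist_eq] using hC t ht⟩)

/-- A sequence `x : ℕ → X` converges to the boundary point `ξ`: the Gromov products with a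
representing ray go to infinity. -/
def SeqConv (o : X) (x : ℕ → X) (ξ : GromovBoundary X) : Prop :=
  ∃ r : GeodesicRay X, r.pt = ξ ∧
    Tendsto (fun p : ℕ × ℕ => gprod o (x p.1) (r.toFun p.2)) atTop atTop

/-- The limit set of a group of isometries: accumulation points of the orbit `G • o` on the
Gromov boundary. -/
def limitSet (G : Subgroup (X ≃ᵢ X)) (o : X) : Set (GromovBoundary X) :=
  {ξ | ∃ g : ℕ → G, Tendsto (fun n => dist o ((g n : X ≃ᵢ X) o)) atTop atTop ∧
    SeqConv o (fun n => (g n : X ≃ᵢ X) o) ξ}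

/-- `ξ` is a conical limit point of `G`: `ξ ∈ ΛG` and there are `R > 0`, a geodesic ray `σ`
ending at `ξ` and a sequence `gₙ ∈ G` with `gₙ o → ξ` and `d(gₙ o, σ) ≤ R`. -/
def conicalSet (G : Subgroup (X ≃ᵢ X)) (o : X) : Set (GromovBoundary X) :=
  {ξ | ξ ∈ limitSet G o ∧ ∃ R > (0 : ℝ), ∃ σ : GeodesicRay X, σ.pt = ξ ∧ ∃ g : ℕ → G,
    SeqConv o (fun n => (g n : X ≃ᵢ X) o) ξ ∧
    ∀ n, infDist ((g n : X ≃ᵢ X) o) (σ.toFun '' Ici 0) ≤ R}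

/-- The non-conical limit set. -/
def nonconicalSet (G : Subgroup (X ≃ᵢ X)) (o : X) : Set (GromovBoundary X) :=
  limitSet G o \ conicalSet G o

/-- The critical exponent `δ_G = limsup (1/n) log #{g ∈ G : d(o, g o) ≤ n}`. -/
def critExp (G : Subgroup (X ≃ᵢ X)) (o : X) : ℝ :=
  limsup (fun n : ℕ =>
    Real.log (Set.ncard {g : X ≃ᵢ X | g ∈ G ∧ dist o (g o) ≤ n}) / n) atTop

/-- The action of `G` on `X` is properly discontinuous. -/
def ProperAct (G : Subgroup (X ≃ᵢ X)) : Prop :=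
  ∀ (x : X) (R : ℝ), {g : X ≃ᵢ X | g ∈ G ∧ dist x (g x) ≤ R}.Finite

/-- A bi-infinite geodesic in `X`. -/
structure GeodesicLine (X : Type*) [MetricSpace X] where
  toFun : ℝ → X
  geodesic : IsGeodesicOn toFun univ

/-- The positive geodesic ray of a line. -/
def GeodesicLine.posRay (l : GeodesicLine X) : GeodesicRay X :=
  ⟨l.toFun, fun u _ v _ => l.geodesic u trivial v trivial⟩

/-- The negative geodesic ray of a line. -/
def GeodesicLine.negRay (l : GeodesicLine X) : GeodesicRay X :=
  ⟨fun t => l.toFun (-t), fun u _ v _ => by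
    rw [l.geodesic (-u) trivial (-v) trivial, neg_sub_neg, abs_sub_comm]⟩

/-- The line `l` joins the boundary points `ξ` and `η`. -/
def Joins (l : GeodesicLine X) (ξ η : GromovBoundary X) : Prop :=
  l.posRay.pt = ξ ∧ l.negRay.pt = η

/-- The given metric on the Gromov boundary is a visual metric with parameter `ε` and
basepoint `o`: `dist ξ η ≍ exp (-ε d(o, [ξ,η]))` with a uniform multiplicative constant. -/
def IsVisualMetric (o : X) (ε : ℝ) [MetricSpace (GromovBoundary X)] : Prop :=
  ∃ C ≥ (1 : ℝ), ∀ ξ η : GromovBoundary X, ∀ l : GeodesicLine X, Joins l ξ η →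
    dist ξ η ≤ C * Real.exp (-ε * infDist o (range l.toFun)) ∧
    Real.exp (-ε * infDist o (range l.toFun)) / C ≤ dist ξ η

end GromovScaffold

open GromovScaffold

namespace LSD17
open GromovScaffold Metric Filter Set Real

variable {X : Type*} [MetricSpace X]

lemma gp_eq (o x y : X) : gprod o x y = (dist o x + dist o y - dist x y)/2 := by
  rw [gprod, dist_comm x o, dist_comm y o]

lemma gp_comm (o x y : X) : gprod o x y = gprod o y x := by
  rw [gp_eq, gp_eq, dist_comm x y]; ring

lemma gp_nonneg (o x y : X) : 0 ≤ gprod o x y := by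
  have h := dist_triangle x o y
  rw [gprod]; rw [dist_comm o y] at h; linarith

lemma gp_le_left (o x y : X) : gprod o x y ≤ dist o x := by
  have h := dist_triangle o x y
  rw [gp_eq]; linarith [dist_nonneg (x := o) (y := y), dist_triangle o y x,
    dist_comm y x]

lemma gp_le_right (o x y : X) : gprod o x y ≤ dist o y := by
  rw [gp_comm]; exact gp_le_left o y x

lemma gp_self (o x : X) : gprod o x x = dist o x := by
  rw [gp_eq, dist_self]; ring

lemma dist_eq_gp (o x y : X) : dist x y = dist o x + dist o y - 2 * gprod o x y := by
  rw [gp_eq]; ring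

lemma gp_map (e : X ≃ᵢ X) (z x y : X) : gprod (e z) (e x) (e y) = gprod z x y := by
  rw [gprod, gprod, e.dist_eq, e.dist_eq, e.dist_eq]

lemma gp_base (z z' x y : X) : gprod z x y ≤ gprod z' x y + dist z z' := by
  rw [gprod, gprod]
  have h1 := dist_triangle x z' z
  have h2 := dist_triangle y z' z
  have h3 := dist_comm z' z
  linarith

lemma dist_inv_orbit (e : X ≃ᵢ X) (o : X) : dist o (e⁻¹ o) = dist o (e o) := by
  have : dist (e o) (e (e⁻¹ o)) = dist o (e⁻¹ o) := e.dist_eq o (e⁻¹ o)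
  rw [e.apply_inv_self] at this
  rw [← this, dist_comm]

lemma gp_L5 (e : X ≃ᵢ X) (o u : X) :
    gprod o (e u) (e o) = dist o (e⁻¹ o) - gprod o (e⁻¹ o) u := by
  have h1 : dist (e u) (e o) = dist u o := e.dist_eq u o
  have h2 : dist (e u) o = dist u (e⁻¹ o) := by
    have := e.dist_eq u (e⁻¹ o); rw [e.apply_inv_self] at this; rw [this]
  have h3 : dist (e o) o = dist o (e⁻¹ o) := by
    rw [dist_comm, dist_inv_orbit]
  rw [gprod, gprod, h1, h2, h3]
  have h4 := dist_comm (e⁻¹ o) o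
  have h5 := dist_comm u (e⁻¹ o)
  have h6 := dist_comm u o
  linarith


lemma gp_L9 (e : X ≃ᵢ X) (o u v : X) :
    gprod o (e⁻¹ u) (e⁻¹ v) =
      dist o (e o) + gprod o u v - gprod o u (e o) - gprod o v (e o) := by
  have h0 : gprod (e o) (e (e⁻¹ u)) (e (e⁻¹ v)) = gprod o (e⁻¹ u) (e⁻¹ v) := gp_map e o _ _
  rw [e.apply_inv_self, e.apply_inv_self] at h0
  rw [← h0]
  have h1 := dist_eq_gp o u (e o)
  have h2 := dist_eq_gp o v (e o)
  have h3 := dist_eq_gp o u v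
  rw [gp_eq (e o) u v]
  have h4 := dist_comm u (e o)
  have h5 := dist_comm v (e o)
  linarith

lemma four_lower {δ : ℝ} (hhyp : IsGromovHyperbolic X δ) {o x z y : X} {A B : ℝ} (h1 : A ≤ gprod o x z) (h2 : B ≤ gprod o z y) :
    min A B - δ ≤ gprod o x y := by
  have := hhyp o x y z
  have : min A B ≤ min (gprod o x z) (gprod o z y) := le_min (le_trans (min_le_left _ _) h1)
    (le_trans (min_le_right _ _) h2)
  linarith [hhyp o x y z]

lemma four_upper {δ : ℝ} (hhyp : IsGromovHyperbolic X δ) {o a b c : X} {T β : ℝ} (h1 : T ≤ gprod o a c) (h2 : gprod o b c ≤ β)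
    (h3 : β + δ < T) : gprod o a b ≤ β + δ := by
  by_contra h
  push_neg at h
  have h4 := hhyp o b c a
  have h5 : gprod o b a = gprod o a b := gp_comm o b a
  have : β + δ < min (gprod o b a) (gprod o a c) := by
    rw [lt_min_iff]; constructor
    · rw [h5]; exact h
    · exact lt_of_lt_of_le h3 h1
  linarith

lemma jt_iff (f : ℕ × ℕ → ℝ) :
    Filter.Tendsto f atTop atTop ↔ ∀ b : ℝ, ∃ N T : ℕ, ∀ n t, N ≤ n → T ≤ t → b ≤ f (n, t) := by
  rw [tendsto_atTop_atTop]
  constructor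
  · intro h b
    obtain ⟨i, hi⟩ := h b
    exact ⟨i.1, i.2, fun n t hn ht => hi (n, t) ⟨hn, ht⟩⟩
  · intro h b
    obtain ⟨N, T, h'⟩ := h b
    exact ⟨(N, T), fun a ha => h' a.1 a.2 ha.1 ha.2⟩


section Rays
open GeodesicRay

lemma ray_mem (t : ℝ) (ht : 0 ≤ t) : t ∈ Set.Ici (0:ℝ) := ht

lemma ray_dist (r : GeodesicRay X) {u t : ℝ} (hu : 0 ≤ u) (ht : 0 ≤ t) :
    dist (r.toFun u) (r.toFun t) = |u - t| := r.geodesic u hu t ht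

lemma ray_dist_lower (o : X) (r : GeodesicRay X) {t : ℝ} (ht : 0 ≤ t) :
    t - dist o (r.toFun 0) ≤ dist o (r.toFun t) := by
  have h := ray_dist r le_rfl ht
  rw [abs_of_nonpos (by linarith)] at h
  have h2 := dist_triangle (r.toFun 0) o (r.toFun t)
  rw [dist_comm (r.toFun 0) o] at h2
  linarith

lemma ray_dist_upper (o : X) (r : GeodesicRay X) {t : ℝ} (ht : 0 ≤ t) :
    dist o (r.toFun t) ≤ t + dist o (r.toFun 0) := by
  have h := ray_dist r le_rfl ht
  rw [abs_of_nonpos (by linarith)] at h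
  have h2 := dist_triangle o (r.toFun 0) (r.toFun t)
  linarith

lemma ray_gp_self (o : X) (r : GeodesicRay X) {u t : ℝ} (hu : 0 ≤ u) (hut : u ≤ t) :
    u - dist o (r.toFun 0) ≤ gprod o (r.toFun u) (r.toFun t) := by
  have ht : (0:ℝ) ≤ t := le_trans hu hut
  have hd := ray_dist r hu ht
  rw [abs_of_nonpos (by linarith)] at hd
  have h1 := ray_dist_lower o r hu
  have h2 := ray_dist_lower o r ht
  rw [gp_eq, hd]
  linarith

lemma merge_asymp {δ : ℝ} (hδ : 0 ≤ δ) (hhyp : IsGromovHyperbolic X δ) (o : X)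
    (r s : GeodesicRay X)
    (h : Filter.Tendsto (fun p : ℕ × ℕ => gprod o (r.toFun p.1) (s.toFun p.2)) atTop atTop) :
    r.Asymp s := by
  set cr := dist o (r.toFun 0) with hcr
  set cs := dist o (s.toFun 0) with hcs
  have hcr0 : 0 ≤ cr := dist_nonneg
  have hcs0 : 0 ≤ cs := dist_nonneg
  refine ⟨3*cr + 3*cs + 4*δ, fun t ht => ?_⟩
  obtain ⟨N, T, hNT⟩ := (jt_iff _).1 h t
  set t' : ℕ := max N ⌈t⌉₊ with ht'
  set u' : ℕ := max T ⌈t⌉₊ with hu'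
  have htt' : t ≤ (t' : ℝ) := le_trans (Nat.le_ceil t) (by exact_mod_cast Nat.le_max_right N ⌈t⌉₊)
  have htu' : t ≤ (u' : ℝ) := le_trans (Nat.le_ceil t) (by exact_mod_cast Nat.le_max_right T ⌈t⌉₊)
  have g1 : t - cr ≤ gprod o (r.toFun t) (r.toFun t') := ray_gp_self o r ht htt'
  have g2 : t ≤ gprod o (r.toFun t') (s.toFun u') := hNT t' u' (le_max_left _ _) (le_max_left _ _)
  have g3 : t - cs ≤ gprod o (s.toFun u') (s.toFun t) := by
    rw [gp_comm]; exact ray_gp_self o s ht htu'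
  have m1 : t - cr - δ ≤ gprod o (r.toFun t) (s.toFun u') := by
    have := four_lower hhyp g1 g2
    have hmin : t - cr ≤ min (t - cr) t := le_min le_rfl (by linarith)
    linarith
  have m2 : t - cr - cs - 2*δ ≤ gprod o (r.toFun t) (s.toFun t) := by
    have := four_lower hhyp m1 g3
    have hmin : t - cr - cs - δ ≤ min (t - cr - δ) (t - cs) :=
      le_min (by linarith) (by linarith)
    linarith
  have d1 := dist_eq_gp o (r.toFun t) (s.toFun t)
  have u1 := ray_dist_upper o r ht
  have u2 := ray_dist_upper o s ht
  linarith

lemma pt_eq_of_merge {δ : ℝ} (hδ : 0 ≤ δ) (hhyp : IsGromovHyperbolic X δ) (o : X)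
    (r s : GeodesicRay X)
    (h : Filter.Tendsto (fun p : ℕ × ℕ => gprod o (r.toFun p.1) (s.toFun p.2)) atTop atTop) :
    r.pt = s.pt :=
  Quotient.sound (merge_asymp hδ hhyp o r s h)

lemma not_merge {δ : ℝ} (hδ : 0 ≤ δ) (hhyp : IsGromovHyperbolic X δ) (o : X)
    {r s : GeodesicRay X} (hne : r.pt ≠ s.pt) :
    ∃ L : ℝ, ∀ N T : ℕ, ∃ t u : ℕ, N ≤ t ∧ T ≤ u ∧ gprod o (r.toFun t) (s.toFun u) < L := by
  by_contra hcon
  push_neg at hcon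
  refine hne (pt_eq_of_merge hδ hhyp o r s ?_)
  rw [jt_iff]
  intro b
  obtain ⟨N, T, hNT⟩ := hcon b
  exact ⟨N, T, fun n t hn ht => hNT n t hn ht⟩

end Rays


section POWpre
variable {δ : ℝ}

lemma gp_left_self (o u : X) : gprod o o u = 0 := by
  rw [gprod, dist_self, dist_comm u o]; ring

lemma dist_pow_succ (o : X) (w : X ≃ᵢ X) (k : ℕ) :
    dist o ((w^(k+1)) o) = dist o (((w⁻¹)^k) o) + dist o (w o)
      - 2 * gprod o (((w⁻¹)^k) o) (w o) := by
  have e1 : dist o ((w^(k+1)) o) = dist (((w⁻¹)^k) o) (w o) := by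
    have h := ((w⁻¹)^k).dist_eq o ((w^(k+1)) o)
    have h2 : ((w⁻¹)^k) ((w^(k+1)) o) = w o := by
      have : (w⁻¹)^k * w^(k+1) = w := by
        rw [inv_pow, pow_succ, inv_mul_cancel_left]
      calc ((w⁻¹)^k) ((w^(k+1)) o) = ((w⁻¹)^k * w^(k+1)) o := rfl
        _ = w o := by rw [this]
    rw [h2] at h
    exact h.symm
  rw [e1, dist_eq_gp o]

lemma dist_pow_add (o : X) (w : X ≃ᵢ X) (a b : ℕ) :
    dist o ((w^(a+b)) o) = dist o ((w^a) o) + dist o ((w^b) o)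
      - 2 * gprod o (((w⁻¹)^a) o) ((w^b) o) := by
  have e1 : dist o ((w^(a+b)) o) = dist (((w⁻¹)^a) o) ((w^b) o) := by
    have h := ((w⁻¹)^a).dist_eq o ((w^(a+b)) o)
    have h2 : ((w⁻¹)^a) ((w^(a+b)) o) = (w^b) o := by
      have : (w⁻¹)^a * w^(a+b) = w^b := by
        rw [inv_pow, pow_add, inv_mul_cancel_left]
      calc ((w⁻¹)^a) ((w^(a+b)) o) = ((w⁻¹)^a * w^(a+b)) o := rfl
        _ = (w^b) o := by rw [this]
    rw [h2] at h
    exact h.symm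
  have e2 : dist o (((w⁻¹)^a) o) = dist o ((w^a) o) := by
    rw [inv_pow]; exact dist_inv_orbit (w^a) o
  rw [e1, dist_eq_gp o, e2]

lemma dist_z_eq (o : X) (w : X ≃ᵢ X) (k : ℕ) :
    dist o (((w⁻¹)^k) o) = dist o ((w^k) o) := by
  rw [inv_pow]; exact dist_inv_orbit (w^k) o

lemma dist_z_z (o : X) (w : X ≃ᵢ X) (k j : ℕ) :
    dist (((w⁻¹)^k) o) (((w⁻¹)^(k+j)) o) = dist o ((w^j) o) := by
  have h := (w^k).dist_eq (((w⁻¹)^k) o) (((w⁻¹)^(k+j)) o)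
  have h1 : (w^k) (((w⁻¹)^k) o) = o := by
    have : w^k * (w⁻¹)^k = 1 := by rw [inv_pow, mul_inv_cancel]
    calc (w^k) (((w⁻¹)^k) o) = (w^k * (w⁻¹)^k) o := rfl
      _ = o := by rw [this]; rfl
  have h2 : (w^k) (((w⁻¹)^(k+j)) o) = ((w⁻¹)^j) o := by
    have : w^k * (w⁻¹)^(k+j) = (w⁻¹)^j := by
      group
    calc (w^k) (((w⁻¹)^(k+j)) o) = (w^k * (w⁻¹)^(k+j)) o := rfl
      _ = ((w⁻¹)^j) o := by rw [this]
  rw [h1, h2] at h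
  rw [← h, dist_z_eq]

lemma dist_pow_w (o : X) (w : X ≃ᵢ X) (j : ℕ) :
    dist ((w^(j+1)) o) (w o) = dist o ((w^j) o) := by
  have h := (w⁻¹).dist_eq ((w^(j+1)) o) (w o)
  have h1 : (w⁻¹) ((w^(j+1)) o) = (w^j) o := by
    have : w⁻¹ * w^(j+1) = w^j := by rw [pow_succ', inv_mul_cancel_left]
    calc (w⁻¹) ((w^(j+1)) o) = (w⁻¹ * w^(j+1)) o := rfl
      _ = (w^j) o := by rw [this]
  have h2 : (w⁻¹) (w o) = o := w.inv_apply_self o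
  rw [h1, h2] at h
  rw [← h, dist_comm]

end POWpre


lemma pow_package {δ B₁ : ℝ} (hδ : 0 ≤ δ) (hB₁ : 0 ≤ B₁) (hhyp : IsGromovHyperbolic X δ)
    (o : X) (y : ℕ → X) (w : X ≃ᵢ X)
    (hy : Filter.Tendsto (fun m => dist o (y m)) atTop atTop)
    (hl : 10*(B₁+δ+1) ≤ dist o (w o))
    (h1 : ∀ᶠ m in atTop, dist o (w o) - (B₁ + δ) ≤ gprod o (w⁻¹ o) (y m))
    (h2 : ∀ᶠ m in atTop, gprod o (y m) (w o) ≤ B₁ + 2*δ)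
    (h3 : ∃ C', ∀ᶠ m in atTop, ∀ᶠ m' in atTop,
        min (dist o (y m)) (dist o (y m')) - C' ≤ gprod o ((w⁻¹) (y m)) (y m')) :
    (∀ k, dist o ((w^(k+1)) o) ≤ dist o ((w^k) o) + dist o (w o)) ∧
    (∀ k : ℕ, (k:ℝ)*(dist o (w o) - 2*(B₁+3*δ)) ≤ dist o ((w^k) o)) ∧
    (∀ k k' : ℕ, 1 ≤ k → k ≤ k' →
      dist o ((w^k) o) - (B₁+4*δ) ≤ gprod o (((w⁻¹)^k) o) (((w⁻¹)^k') o)) ∧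
    (∀ k, 1 ≤ k → ∀ᶠ m in atTop, dist o ((w^k) o) - (B₁+5*δ) ≤ gprod o (((w⁻¹)^k) o) (y m)) ∧
    (∀ k, 1 ≤ k → ∀ᶠ m in atTop, gprod o (y m) ((w^k) o) ≤ B₁+3*δ) ∧
    (∀ k, 1 ≤ k → dist o (w o) - (B₁+3*δ) ≤ gprod o ((w^k) o) (w o)) := by
  obtain ⟨C', h3'⟩ := h3
  set l := dist o (w o) with hldef
  set z : ℕ → X := fun k => ((w⁻¹)^k) o with hzdef
  set f : ℕ → ℝ := fun k => dist o ((w^k) o) with hfdef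
  have hfz : ∀ k, dist o (z k) = f k := fun k => dist_z_eq o w k
  have hzsucc : ∀ k, z (k+1) = w⁻¹ (z k) := by
    intro k
    show ((w⁻¹)^(k+1)) o = w⁻¹ (((w⁻¹)^k) o)
    rw [pow_succ']
    rfl
  have hrec : ∀ k, f (k+1) = f k + l - 2 * gprod o (z k) (w o) := by
    intro k
    have h := dist_pow_succ o w k
    have h2 := dist_z_eq o w k
    simp only [hfdef, hzdef, hldef]
    linarith
  set q : ℕ → ℝ := fun k => l - (B₁+δ) + ((k:ℝ) - 1)*(l - 2*B₁ - 6*δ) with hqdef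
  have hstep1 : (1:ℝ) ≤ l - 2*B₁ - 6*δ := by linarith
  have hq_big : ∀ k : ℕ, 1 ≤ k → B₁ + 4*δ + 1 ≤ q k := by
    intro k hk
    have h1' : (0:ℝ) ≤ (k:ℝ) - 1 := by
      have : (1:ℝ) ≤ (k:ℝ) := by exact_mod_cast hk
      linarith
    have : (0:ℝ) ≤ ((k:ℝ) - 1)*(l - 2*B₁ - 6*δ) := mul_nonneg h1' (by linarith)
    simp only [hqdef]
    linarith
  have hq_unbdd : ∀ k : ℕ, 1 ≤ k → (k:ℝ) - 1 ≤ q k := by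
    intro k hk
    have h1' : (0:ℝ) ≤ (k:ℝ) - 1 := by
      have : (1:ℝ) ≤ (k:ℝ) := by exact_mod_cast hk
      linarith
    have h2' : ((k:ℝ) - 1) * 1 ≤ ((k:ℝ) - 1)*(l - 2*B₁ - 6*δ) :=
      mul_le_mul_of_nonneg_left hstep1 h1'
    simp only [hqdef]
    linarith
  -- main cluster-depth induction
  have hdepth : ∀ k : ℕ, 1 ≤ k → ∀ᶠ m in atTop, q k ≤ gprod o (z k) (y m) := by
    refine Nat.le_induction ?_ ?_
    · filter_upwards [h1] with m hm
      have hz1 : z 1 = w⁻¹ o := by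
        show ((w⁻¹)^1) o = w⁻¹ o
        rw [pow_one]
      have hq1 : q 1 = l - (B₁+δ) := by simp [hqdef]
      rw [hz1, hq1]
      exact hm
    · intro k hk IH
      -- transversality at step k
      have hii : gprod o (z k) (w o) ≤ B₁ + 3*δ := by
        obtain ⟨m₀, hm₁, hm₂⟩ := (IH.and h2).exists
        have hc : gprod o (w o) (y m₀) ≤ B₁ + 2*δ := by
          rw [gp_comm]; exact hm₂
        have := four_upper hhyp hm₁ hc (by linarith [hq_big k hk])
        linarith
      obtain ⟨m, hm_ih, hm_h2, hm_h3, hm_big⟩ :=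
        (IH.and (h2.and (h3'.and (hy.eventually_ge_atTop (q k + l + C'))))).exists
      have key1 : q k + l - 2*(B₁ + 2*δ) - δ ≤ gprod o (z (k+1)) (w⁻¹ (y m)) := by
        have hL9 := gp_L9 w o (z k) (y m)
        rw [hzsucc k]
        rw [hL9]
        linarith
      filter_upwards [hm_h3, hy.eventually_ge_atTop (q k + l + C')] with m' hm'3 hm'big
      have h2' : q k + l ≤ min (dist o (y m)) (dist o (y m')) - C' := by
        have := le_min hm_big hm'big
        linarith
      have hfour := four_lower hhyp key1 (le_trans h2' hm'3)
      have hmin : q (k+1) + δ ≤ min (q k + l - 2*(B₁ + 2*δ) - δ) (q k + l) := by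
        have hq' : q (k+1) = q k + (l - 2*B₁ - 6*δ) := by
          simp only [hqdef]
          push_cast
          ring
        refine le_min (by linarith) (by linarith)
      linarith
  -- transversality for all k
  have hTrans : ∀ k : ℕ, 1 ≤ k → gprod o (z k) (w o) ≤ B₁ + 3*δ := by
    intro k hk
    obtain ⟨m₀, hm₁, hm₂⟩ := ((hdepth k hk).and h2).exists
    have hc : gprod o (w o) (y m₀) ≤ B₁ + 2*δ := by rw [gp_comm]; exact hm₂
    have := four_upper hhyp hm₁ hc (by linarith [hq_big k hk])
    linarith
  have hC1a : ∀ k, f (k+1) ≤ f k + l := by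
    intro k
    have := hrec k
    have := gp_nonneg o (z k) (w o)
    linarith
  have hC1b : ∀ k, f k + l - 2*(B₁+3*δ) ≤ f (k+1) := by
    intro k
    rcases Nat.eq_zero_or_pos k with h0 | hpos
    · subst h0
      have hf0 : f 0 = 0 := by simp [hfdef]
      have hgp : gprod o (z 0) (w o) = 0 := by
        have hz0 : z 0 = o := by
          show ((w⁻¹)^0) o = o
          rw [pow_zero]; rfl
        rw [hz0]; exact gp_left_self o (w o)
      have := hrec 0
      rw [hgp] at this
      linarith
    · have := hrec k
      have := hTrans k hpos
      linarith
  have hC2 : ∀ k : ℕ, (k:ℝ)*(l - 2*(B₁+3*δ)) ≤ f k := by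
    intro k
    induction k with
    | zero => simp [hfdef]
    | succ n ih =>
      have := hC1b n
      push_cast
      have hll : 0 ≤ l - 2*(B₁+3*δ) := by linarith
      nlinarith
  have hC6 : ∀ k : ℕ, 1 ≤ k → l - (B₁+3*δ) ≤ gprod o ((w^k) o) (w o) := by
    intro k hk
    obtain ⟨j, rfl⟩ := Nat.exists_eq_add_of_le hk
    have hd : dist ((w^(1+j)) o) (w o) = f j := by
      rw [add_comm 1 j]; exact dist_pow_w o w j
    have hgp : gprod o ((w^(1+j)) o) (w o) = (f (1+j) + l - f j)/2 := by
      rw [gp_eq, hd]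
    rw [hgp]
    have := hC1b j
    have hj1 : f (j+1) = f (1+j) := by rw [add_comm]
    linarith
  have hC5 : ∀ k : ℕ, 1 ≤ k → ∀ᶠ m in atTop, gprod o (y m) ((w^k) o) ≤ B₁+3*δ := by
    intro k hk
    filter_upwards [h2] with m hm
    have := four_upper hhyp (hC6 k hk) hm (by linarith)
    rw [gp_comm] at this
    linarith
  have hmixed : ∀ a b : ℕ, 1 ≤ a → 1 ≤ b → gprod o (z a) ((w^b) o) ≤ B₁ + 4*δ := by
    intro a b ha hb
    obtain ⟨m, hm₁, hm₂⟩ := ((hdepth a ha).and (hC5 b hb)).exists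
    have hc : gprod o ((w^b) o) (y m) ≤ B₁ + 3*δ := by rw [gp_comm]; exact hm₂
    have := four_upper hhyp hm₁ hc (by linarith [hq_big a ha])
    linarith
  have hsuper : ∀ a b : ℕ, 1 ≤ a → 1 ≤ b → f a + f b - 2*(B₁+4*δ) ≤ f (a+b) := by
    intro a b ha hb
    have := dist_pow_add o w a b
    have := hmixed a b ha hb
    show f a + f b - 2*(B₁+4*δ) ≤ f (a+b)
    simp only [hfdef] at *
    linarith
  have hC3 : ∀ k k' : ℕ, 1 ≤ k → k ≤ k' → f k - (B₁+4*δ) ≤ gprod o (z k) (z k') := by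
    intro k k' hk hkk'
    rcases eq_or_lt_of_le hkk' with heq | hlt
    · subst heq
      have : gprod o (z k) (z k) = f k := by rw [gp_self, hfz]
      rw [this]
      linarith
    · obtain ⟨j, rfl⟩ : ∃ j, k' = k + j := ⟨k' - k, by omega⟩
      have hj : 1 ≤ j := by omega
      have hd : dist (z k) (z (k+j)) = f j := dist_z_z o w k j
      have hgp : gprod o (z k) (z (k+j)) = (f k + f (k+j) - f j)/2 := by
        rw [gp_eq, hd, hfz, hfz]
      rw [hgp]
      have := hsuper k j hk hj
      linarith
  have hC4 : ∀ k : ℕ, 1 ≤ k → ∀ᶠ m in atTop, f k - (B₁+5*δ) ≤ gprod o (z k) (y m) := by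
    intro k hk
    set K : ℕ := k + ⌈f k⌉₊ + 1 with hKdef
    have hKk : k ≤ K := by omega
    have hK1 : 1 ≤ K := by omega
    have hqK : f k ≤ q K := by
      have h1' := hq_unbdd K hK1
      have h2' : f k ≤ (⌈f k⌉₊ : ℝ) := Nat.le_ceil (f k)
      have h3' : ((⌈f k⌉₊:ℝ)) ≤ (K:ℝ) - 1 := by
        simp only [hKdef]
        push_cast
        linarith [Nat.cast_nonneg (α := ℝ) k]
      linarith
    filter_upwards [hdepth K hK1] with m hm
    have h1' : f k - (B₁+4*δ) ≤ gprod o (z k) (z K) := hC3 k K hk hKk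
    have h2' : f k ≤ gprod o (z K) (y m) := le_trans hqK hm
    have hfour := four_lower hhyp h1' h2'
    have hmin : f k - (B₁+4*δ) ≤ min (f k - (B₁+4*δ)) (f k) := le_min le_rfl (by linarith)
    linarith
  exact ⟨hC1a, hC2, hC3, hC4, hC5, hC6⟩


lemma crossing (g : ℕ → ℝ) {A L : ℝ} (h0 : g 0 ≤ A) (h1 : g 1 ≤ A)
    (hstep : ∀ k, g (k+1) ≤ g k + L) (T : ℕ) (hT : A < g T) :
    ∃ k, 1 ≤ k ∧ g k ≤ A ∧ A - g k ≤ L := by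
  induction T with
  | zero => exact absurd hT (not_lt.2 h0)
  | succ T ih =>
    by_cases hgT : A < g T
    · exact ih hgT
    · push_neg at hgT
      rcases Nat.eq_zero_or_pos T with rfl | hT1
      · exact absurd hT (not_lt.2 h1)
      · exact ⟨T, hT1, hgT, by linarith [hstep T]⟩

set_option maxHeartbeats 2000000 in
lemma case2_false {δ : ℝ} (hδ : 0 ≤ δ) (hhyp : IsGromovHyperbolic X δ)
    (G : Subgroup (X ≃ᵢ X)) (hproper : ProperAct G) (o : X)
    (a e : ℕ → G) (r s : GeodesicRay X)
    (hne : r.pt ≠ s.pt)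
    (hdn : Filter.Tendsto (fun n => dist o (((a n : X ≃ᵢ X))⁻¹ o)) atTop atTop)
    (hDm : Filter.Tendsto (fun m => dist o (((e m : X ≃ᵢ X))⁻¹ o)) atTop atTop)
    (hJa : Filter.Tendsto (fun p : ℕ × ℕ =>
      gprod o ((a p.1 : X ≃ᵢ X) o) (r.toFun p.2)) atTop atTop)
    (hJe : Filter.Tendsto (fun p : ℕ × ℕ =>
      gprod o ((e p.1 : X ≃ᵢ X) o) (s.toFun p.2)) atTop atTop)
    (hNC : ∀ v : G, ∃ B : ℝ, 0 ≤ B ∧ ∃ K : ℕ, ∀ n m : ℕ, K ≤ n → K ≤ m →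
      min (dist o (((a n : X ≃ᵢ X))⁻¹ o)) (dist o (((e m : X ≃ᵢ X))⁻¹ o)) - B ≤
        gprod o (((a n : X ≃ᵢ X))⁻¹ o) ((v : X ≃ᵢ X) (((e m : X ≃ᵢ X))⁻¹ o))) :
    False := by
  classical
  set x : ℕ → X := fun n => ((a n : X ≃ᵢ X))⁻¹ o with hxdef
  set y : ℕ → X := fun m => ((e m : X ≃ᵢ X))⁻¹ o with hydef
  set dn : ℕ → ℝ := fun n => dist o (x n) with hdndef
  set Dm : ℕ → ℝ := fun m => dist o (y m) with hDmdef
  -- base failure constant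
  obtain ⟨B₁, hB₁0, K₁, hB₁⟩ := hNC 1
  have hB₁' : ∀ n m : ℕ, K₁ ≤ n → K₁ ≤ m →
      min (dn n) (Dm m) - B₁ ≤ gprod o (x n) (y m) := by
    intro n m hn hm
    have := hB₁ n m hn hm
    simpa using this
  -- y-cluster
  have hclus : ∀ m m' : ℕ, K₁ ≤ m → K₁ ≤ m' →
      min (Dm m) (Dm m') - (B₁ + δ) ≤ gprod o (y m) (y m') := by
    intro m m' hm hm'
    obtain ⟨n, hnd, hnK⟩ :=
      ((hdn.eventually_ge_atTop (max (Dm m) (Dm m'))).and (eventually_ge_atTop K₁)).exists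
    have hd1 : Dm m ≤ dn n := le_trans (le_max_left _ _) hnd
    have hd2 : Dm m' ≤ dn n := le_trans (le_max_right _ _) hnd
    have t1 : Dm m - B₁ ≤ gprod o (y m) (x n) := by
      rw [gp_comm]
      have := hB₁' n m hnK hm
      have : min (dn n) (Dm m) = Dm m := min_eq_right hd1
      linarith [hB₁' n m hnK hm, min_eq_right hd1]
    have t2 : Dm m' - B₁ ≤ gprod o (x n) (y m') := by
      have := hB₁' n m' hnK hm'
      have hmin : min (dn n) (Dm m') = Dm m' := min_eq_right hd2
      linarith
    have hfour := four_lower hhyp t1 t2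
    have hmin2 : min (Dm m) (Dm m') - B₁ ≤ min (Dm m - B₁) (Dm m' - B₁) :=
      le_min (by linarith [min_le_left (Dm m) (Dm m')])
        (by linarith [min_le_right (Dm m) (Dm m')])
    linarith
  -- boundedness of forward cross products (uses r.pt ≠ s.pt)
  obtain ⟨L₀, hL₀⟩ := not_merge hδ hhyp o hne
  set C₀ : ℝ := max (L₀ + 2*δ) 0 with hC₀def
  have hC₀0 : 0 ≤ C₀ := le_max_right _ _
  obtain ⟨Nr, Tr, hNr⟩ := (jt_iff _).1 hJa (C₀ + 2*δ + 1)
  obtain ⟨Ns, Ts, hNs⟩ := (jt_iff _).1 hJe (C₀ + 2*δ + 1)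
  set N₀ : ℕ := max Nr Ns with hN₀def
  have hbnd : ∀ n m : ℕ, N₀ ≤ n → N₀ ≤ m →
      gprod o ((a n : X ≃ᵢ X) o) ((e m : X ≃ᵢ X) o) ≤ C₀ := by
    intro n m hn hm
    by_contra hcon
    push_neg at hcon
    obtain ⟨t, u, htT, huT, htu⟩ := hL₀ Tr Ts
    have g1 : C₀ + 2*δ + 1 ≤ gprod o (r.toFun t) ((a n : X ≃ᵢ X) o) := by
      rw [gp_comm]
      exact hNr n t (le_trans (le_max_left _ _) hn) htT
    have g2 : C₀ ≤ gprod o ((a n : X ≃ᵢ X) o) ((e m : X ≃ᵢ X) o) := le_of_lt hcon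
    have g3 : C₀ + 2*δ + 1 ≤ gprod o ((e m : X ≃ᵢ X) o) (s.toFun u) :=
      hNs m u (le_trans (le_max_right _ _) hm) huT
    have f1 := four_lower hhyp g2 g3
    have f1' : C₀ - δ ≤ gprod o ((a n : X ≃ᵢ X) o) (s.toFun u) := by
      have : C₀ ≤ min C₀ (C₀ + 2*δ + 1) := le_min le_rfl (by linarith)
      linarith
    have f2 := four_lower hhyp g1 f1'
    have f2' : C₀ - 2*δ ≤ gprod o (r.toFun t) (s.toFun u) := by
      have : C₀ - δ ≤ min (C₀ + 2*δ + 1) (C₀ - δ) := le_min (by linarith) le_rfl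
      linarith
    have : L₀ ≤ gprod o (r.toFun t) (s.toFun u) := by
      have : L₀ ≤ C₀ - 2*δ := by
        have := le_max_left (L₀ + 2*δ) (0:ℝ)
        simp only [hC₀def]
        linarith
      linarith
    linarith
  -- step1 : images of deep cluster points are deep
  have hstep1 : ∀ v : G, ∃ C' : ℝ, 0 ≤ C' ∧ ∃ K' : ℕ, ∀ m m' : ℕ, K' ≤ m → K' ≤ m' →
      min (Dm m) (Dm m') - C' ≤ gprod o ((v : X ≃ᵢ X) (y m)) (y m') := by
    intro v
    obtain ⟨B, hB0, K, hB⟩ := hNC v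
    refine ⟨max B B₁ + δ, by positivity, max K K₁, ?_⟩
    intro m m' hm hm'
    obtain ⟨n, hnd, hnK⟩ :=
      ((hdn.eventually_ge_atTop (max (Dm m) (Dm m'))).and
        (eventually_ge_atTop (max K K₁))).exists
    have hd1 : Dm m ≤ dn n := le_trans (le_max_left _ _) hnd
    have hd2 : Dm m' ≤ dn n := le_trans (le_max_right _ _) hnd
    have t1 : Dm m - max B B₁ ≤ gprod o ((v : X ≃ᵢ X) (y m)) (x n) := by
      rw [gp_comm]
      have h := hB n m (le_trans (le_max_left _ _) hnK) (le_trans (le_max_left _ _) hm)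
      have hmin : min (dn n) (Dm m) = Dm m := min_eq_right hd1
      have : B ≤ max B B₁ := le_max_left _ _
      rw [hmin] at h
      linarith
    have t2 : Dm m' - max B B₁ ≤ gprod o (x n) (y m') := by
      have h := hB₁' n m' (le_trans (le_max_right _ _) hnK) (le_trans (le_max_right _ _) hm')
      have hmin : min (dn n) (Dm m') = Dm m' := min_eq_right hd2
      have : B₁ ≤ max B B₁ := le_max_right _ _
      rw [hmin] at h
      linarith
    have hfour := four_lower hhyp t1 t2
    have hmin2 : min (Dm m) (Dm m') - max B B₁ ≤ min (Dm m - max B B₁) (Dm m' - max B B₁) :=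
      le_min (by linarith [min_le_left (Dm m) (Dm m')])
        (by linarith [min_le_right (Dm m) (Dm m')])
    linarith
  -- choose the two hyperbolic-like elements
  set Θ : ℝ := 20*(B₁ + C₀ + δ + 1) with hΘdef
  obtain ⟨nst, hnst_d, hnst_K⟩ :=
    ((hdn.eventually_ge_atTop Θ).and (eventually_ge_atTop (max K₁ N₀))).exists
  obtain ⟨mst, hmst_d, hmst_K⟩ :=
    ((hDm.eventually_ge_atTop Θ).and (eventually_ge_atTop (max K₁ N₀))).exists
  set w₁ : X ≃ᵢ X := (a nst : X ≃ᵢ X) with hw₁def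
  set w₂ : X ≃ᵢ X := (e mst : X ≃ᵢ X) with hw₂def
  set l₁ : ℝ := dist o (w₁ o) with hl₁def
  set l₂ : ℝ := dist o (w₂ o) with hl₂def
  have hl₁x : dn nst = l₁ := dist_inv_orbit w₁ o
  have hl₂y : Dm mst = l₂ := dist_inv_orbit w₂ o
  have hΘl₁ : Θ ≤ l₁ := hl₁x ▸ hnst_d
  have hΘl₂ : Θ ≤ l₂ := hl₂y ▸ hmst_d
  have hΘ0 : (0:ℝ) ≤ Θ := by simp only [hΘdef]; linarith
  have hnstK₁ : K₁ ≤ nst := le_trans (le_max_left _ _) hnst_K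
  have hnstN₀ : N₀ ≤ nst := le_trans (le_max_right _ _) hnst_K
  have hmstK₁ : K₁ ≤ mst := le_trans (le_max_left _ _) hmst_K
  have hmstN₀ : N₀ ≤ mst := le_trans (le_max_right _ _) hmst_K
  -- POW hypotheses for w₁
  have h1₁ : ∀ᶠ m in atTop, l₁ - (B₁ + δ) ≤ gprod o (w₁⁻¹ o) (y m) := by
    filter_upwards [hDm.eventually_ge_atTop l₁, eventually_ge_atTop K₁] with m h1m h2m
    have h := hB₁' nst m hnstK₁ h2m
    have hmin : min (dn nst) (Dm m) = dn nst := min_eq_left (by rw [hl₁x]; exact h1m)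
    rw [hmin, hl₁x] at h
    have : gprod o (x nst) (y m) = gprod o (w₁⁻¹ o) (y m) := rfl
    rw [this] at h
    linarith
  have hstep2₁ : ∀ μ, K₁ ≤ μ → l₁ ≤ Dm μ → gprod o (w₁ (y μ)) (w₁ o) ≤ B₁ := by
    intro μ hμ hD
    have hL5 : gprod o (w₁ (y μ)) (w₁ o) = dn nst - gprod o (x nst) (y μ) :=
      gp_L5 w₁ o (y μ)
    have h := hB₁' nst μ hnstK₁ hμ
    have hmin : min (dn nst) (Dm μ) = dn nst := min_eq_left (by rw [hl₁x]; exact hD)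
    rw [hmin] at h
    rw [hL5]
    linarith
  have h2₁ : ∀ᶠ m in atTop, gprod o (y m) (w₁ o) ≤ B₁ + 2*δ := by
    obtain ⟨C'', hC''0, K'', hK''⟩ := hstep1 (a nst)
    obtain ⟨μs, hμs1, hμs2⟩ :=
      ((hDm.eventually_ge_atTop (max l₁ (B₁ + 2*δ + C'' + 1))).and
        (eventually_ge_atTop (max K₁ K''))).exists
    filter_upwards [hDm.eventually_ge_atTop (B₁ + 2*δ + C'' + 1),
      eventually_ge_atTop K''] with m' hD' hK'
    have t1 : B₁ + δ + 1 ≤ gprod o (y m') (w₁ (y μs)) := by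
      rw [gp_comm]
      have h := hK'' μs m' (le_trans (le_max_right _ _) hμs2) hK'
      have b1 : B₁ + 2*δ + C'' + 1 ≤ Dm μs := le_trans (le_max_right _ _) hμs1
      have b2 : B₁ + 2*δ + C'' + 1 ≤ min (Dm μs) (Dm m') := le_min b1 hD'
      have : gprod o ((w₁ : X ≃ᵢ X) (y μs)) (y m') = gprod o (w₁ (y μs)) (y m') := rfl
      linarith
    have t2 : gprod o (w₁ o) (w₁ (y μs)) ≤ B₁ := by
      rw [gp_comm]
      exact hstep2₁ μs (le_trans (le_max_left _ _) hμs2) (le_trans (le_max_left _ _) hμs1)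
    have := four_upper hhyp t1 t2 (by linarith)
    linarith
  have h3₁ : ∃ C', ∀ᶠ m in atTop, ∀ᶠ m' in atTop,
      min (dist o (y m)) (dist o (y m')) - C' ≤ gprod o ((w₁⁻¹) (y m)) (y m') := by
    obtain ⟨C₃, hC₃0, K₃, hK₃⟩ := hstep1 ((a nst)⁻¹)
    refine ⟨C₃, ?_⟩
    filter_upwards [eventually_ge_atTop K₃] with m hm
    filter_upwards [eventually_ge_atTop K₃] with m' hm'
    exact hK₃ m m' hm hm'
  have hlw₁ : 10*(B₁+δ+1) ≤ dist o (w₁ o) := by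
    rw [← hl₁def]
    simp only [hΘdef] at hΘl₁
    linarith
  obtain ⟨P1a, P1b, P1c, P1d, P1e, P1f⟩ :=
    pow_package hδ hB₁0 hhyp o y w₁ hDm hlw₁ h1₁ h2₁ h3₁
  -- POW hypotheses for w₂
  have h1₂ : ∀ᶠ m in atTop, l₂ - (B₁ + δ) ≤ gprod o (w₂⁻¹ o) (y m) := by
    filter_upwards [hDm.eventually_ge_atTop l₂, eventually_ge_atTop K₁] with m h1m h2m
    have h := hclus mst m hmstK₁ h2m
    have hmin : min (Dm mst) (Dm m) = Dm mst := min_eq_left (by rw [hl₂y]; exact h1m)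
    rw [hmin, hl₂y] at h
    exact h
  have hstep2₂ : ∀ μ, K₁ ≤ μ → l₂ ≤ Dm μ → gprod o (w₂ (y μ)) (w₂ o) ≤ B₁ + δ := by
    intro μ hμ hD
    have hL5 : gprod o (w₂ (y μ)) (w₂ o) = Dm mst - gprod o (y mst) (y μ) :=
      gp_L5 w₂ o (y μ)
    have h := hclus mst μ hmstK₁ hμ
    have hmin : min (Dm mst) (Dm μ) = Dm mst := min_eq_left (by rw [hl₂y]; exact hD)
    rw [hmin] at h
    rw [hL5]
    linarith
  have h2₂ : ∀ᶠ m in atTop, gprod o (y m) (w₂ o) ≤ B₁ + 2*δ := by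
    obtain ⟨C'', hC''0, K'', hK''⟩ := hstep1 (e mst)
    obtain ⟨μs, hμs1, hμs2⟩ :=
      ((hDm.eventually_ge_atTop (max l₂ (B₁ + 2*δ + C'' + 1))).and
        (eventually_ge_atTop (max K₁ K''))).exists
    filter_upwards [hDm.eventually_ge_atTop (B₁ + 2*δ + C'' + 1),
      eventually_ge_atTop K''] with m' hD' hK'
    have t1 : B₁ + 2*δ + 1 ≤ gprod o (y m') (w₂ (y μs)) := by
      rw [gp_comm]
      have h := hK'' μs m' (le_trans (le_max_right _ _) hμs2) hK'
      have b1 : B₁ + 2*δ + C'' + 1 ≤ Dm μs := le_trans (le_max_right _ _) hμs1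
      have b2 : B₁ + 2*δ + C'' + 1 ≤ min (Dm μs) (Dm m') := le_min b1 hD'
      have : gprod o ((w₂ : X ≃ᵢ X) (y μs)) (y m') = gprod o (w₂ (y μs)) (y m') := rfl
      linarith
    have t2 : gprod o (w₂ o) (w₂ (y μs)) ≤ B₁ + δ := by
      rw [gp_comm]
      exact hstep2₂ μs (le_trans (le_max_left _ _) hμs2) (le_trans (le_max_left _ _) hμs1)
    have := four_upper hhyp t1 t2 (by linarith)
    linarith
  have h3₂ : ∃ C', ∀ᶠ m in atTop, ∀ᶠ m' in atTop,
      min (dist o (y m)) (dist o (y m')) - C' ≤ gprod o ((w₂⁻¹) (y m)) (y m') := by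
    obtain ⟨C₃, hC₃0, K₃, hK₃⟩ := hstep1 ((e mst)⁻¹)
    refine ⟨C₃, ?_⟩
    filter_upwards [eventually_ge_atTop K₃] with m hm
    filter_upwards [eventually_ge_atTop K₃] with m' hm'
    exact hK₃ m m' hm hm'
  have hlw₂ : 10*(B₁+δ+1) ≤ dist o (w₂ o) := by
    rw [← hl₂def]
    simp only [hΘdef] at hΘl₂
    linarith
  obtain ⟨P2a, P2b, P2c, P2d, P2e, P2f⟩ :=
    pow_package hδ hB₁0 hhyp o y w₂ hDm hlw₂ h1₂ h2₂ h3₂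
  -- forward cross bound
  have hgrow₁ : ∀ p : ℕ, 1 ≤ p → Θ - 2*B₁ - 6*δ ≤ dist o ((w₁^p) o) := by
    intro p hp
    have h := P1b p
    have hfac : Θ - 2*(B₁+3*δ) ≤ l₁ - 2*(B₁+3*δ) := by linarith
    have hfac0 : (0:ℝ) ≤ l₁ - 2*(B₁+3*δ) := by
      simp only [hΘdef] at hΘl₁; linarith
    have hp1 : (1:ℝ) ≤ (p:ℝ) := by exact_mod_cast hp
    have : 1*(l₁ - 2*(B₁+3*δ)) ≤ (p:ℝ)*(l₁ - 2*(B₁+3*δ)) :=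
      mul_le_mul_of_nonneg_right hp1 hfac0
    simp only [hl₁def] at h this hfac0 ⊢
    linarith
  have hgrow₂ : ∀ p : ℕ, 1 ≤ p → Θ - 2*B₁ - 6*δ ≤ dist o ((w₂^p) o) := by
    intro p hp
    have h := P2b p
    have hfac0 : (0:ℝ) ≤ l₂ - 2*(B₁+3*δ) := by
      simp only [hΘdef] at hΘl₂; linarith
    have hp1 : (1:ℝ) ≤ (p:ℝ) := by exact_mod_cast hp
    have : 1*(l₂ - 2*(B₁+3*δ)) ≤ (p:ℝ)*(l₂ - 2*(B₁+3*δ)) :=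
      mul_le_mul_of_nonneg_right hp1 hfac0
    simp only [hl₂def] at h this hfac0 ⊢
    linarith
  have hΘbig : C₀ + 2*δ + 1 + 1 ≤ Θ - 2*B₁ - 6*δ := by
    simp only [hΘdef]; linarith
  have hcross : ∀ p q : ℕ, 1 ≤ p → 1 ≤ q →
      gprod o ((w₁^p) o) ((w₂^q) o) ≤ C₀ + 2*δ + 1 := by
    intro p q hp hq
    by_contra hcon
    push_neg at hcon
    have st1 : C₀ + 2*δ + 1 ≤ gprod o (w₁ o) ((w₁^p) o) := by
      rw [gp_comm]
      have := P1f p hp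
      simp only [hl₁def] at hΘl₁
      linarith
    have st2 : C₀ + 2*δ + 1 ≤ gprod o ((w₁^p) o) ((w₂^q) o) := le_of_lt hcon
    have f1 := four_lower hhyp st1 st2
    have f1' : C₀ + δ + 1 ≤ gprod o (w₁ o) ((w₂^q) o) := by
      have : C₀ + 2*δ + 1 ≤ min (C₀ + 2*δ + 1) (C₀ + 2*δ + 1) := le_min le_rfl le_rfl
      linarith
    have st3 : C₀ + δ + 1 ≤ gprod o ((w₂^q) o) (w₂ o) := by
      have h := P2f q hq
      linarith [hΘl₂, hl₂def.symm.le, hl₂def.le]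
    have f2 := four_lower hhyp f1' st3
    have f2' : C₀ + 1 ≤ gprod o (w₁ o) (w₂ o) := by
      have : C₀ + δ + 1 ≤ min (C₀ + δ + 1) (C₀ + δ + 1) := le_min le_rfl le_rfl
      linarith
    have := hbnd nst mst hnstN₀ hmstN₀
    have hww : gprod o (w₁ o) (w₂ o) = gprod o ((a nst : X ≃ᵢ X) o) ((e mst : X ≃ᵢ X) o) := rfl
    rw [hww] at f2'
    linarith
  -- backward cross bound
  have hcrossback : ∀ p q : ℕ, 1 ≤ p → 1 ≤ q →
      min (dist o ((w₁^p) o)) (dist o ((w₂^q) o)) - (B₁ + 6*δ) ≤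
        gprod o (((w₁⁻¹)^p) o) (((w₂⁻¹)^q) o) := by
    intro p q hp hq
    obtain ⟨m, hm₁, hm₂⟩ := ((P1d p hp).and (P2d q hq)).exists
    have hm₂' : dist o ((w₂^q) o) - (B₁+5*δ) ≤ gprod o (y m) (((w₂⁻¹)^q) o) := by
      rw [gp_comm]; exact hm₂
    have hfour := four_lower hhyp hm₁ hm₂'
    have hmin : min (dist o ((w₁^p) o)) (dist o ((w₂^q) o)) - (B₁+5*δ) ≤
        min (dist o ((w₁^p) o) - (B₁+5*δ)) (dist o ((w₂^q) o) - (B₁+5*δ)) :=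
      le_min (by linarith [min_le_left (dist o ((w₁^p) o)) (dist o ((w₂^q) o))])
        (by linarith [min_le_right (dist o ((w₁^p) o)) (dist o ((w₂^q) o))])
    linarith
  -- matching function
  have hf₂0 : dist o ((w₂^0) o) = 0 := by
    have : (w₂^0) o = o := by rw [pow_zero]; rfl
    rw [this, dist_self]
  have hf₂1 : dist o ((w₂^1) o) = l₂ := by rw [pow_one, hl₂def]
  have hQex : ∀ p : ℕ, ∃ Qp : ℕ, 1 ≤ Qp ∧ (l₂ ≤ dist o ((w₁^p) o) →
      dist o ((w₂^Qp) o) ≤ dist o ((w₁^p) o) ∧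
      dist o ((w₁^p) o) - dist o ((w₂^Qp) o) ≤ l₂) := by
    intro p
    by_cases hp : l₂ ≤ dist o ((w₁^p) o)
    · have hex : ∃ T, dist o ((w₁^p) o) < dist o ((w₂^T) o) := by
        refine ⟨⌈dist o ((w₁^p) o)⌉₊ + 1, ?_⟩
        have hfac : (1:ℝ) ≤ l₂ - 2*(B₁+3*δ) := by linarith
        have h := P2b (⌈dist o ((w₁^p) o)⌉₊ + 1)
        rw [← hl₂def] at h
        have hmono : ((⌈dist o ((w₁^p) o)⌉₊ + 1 : ℕ):ℝ) ≤
            ((⌈dist o ((w₁^p) o)⌉₊ + 1 : ℕ):ℝ) * (l₂ - 2*(B₁+3*δ)) := by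
          nlinarith [Nat.cast_nonneg (α := ℝ) (⌈dist o ((w₁^p) o)⌉₊ + 1)]
        have hceil : dist o ((w₁^p) o) < ((⌈dist o ((w₁^p) o)⌉₊ + 1 : ℕ):ℝ) := by
          push_cast
          linarith [Nat.le_ceil (dist o ((w₁^p) o))]
        linarith
      obtain ⟨T, hT⟩ := hex
      have h0' : dist o ((w₂^0) o) ≤ dist o ((w₁^p) o) := by
        rw [hf₂0]; exact dist_nonneg
      have h1' : dist o ((w₂^1) o) ≤ dist o ((w₁^p) o) := by
        rw [hf₂1]; exact hp
      have hstep' : ∀ k, dist o ((w₂^(k+1)) o) ≤ dist o ((w₂^k) o) + l₂ := by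
        intro k
        have := P2a k
        linarith [hl₂def.le, hl₂def.symm.le]
      obtain ⟨k, hk1, hk2, hk3⟩ := crossing (fun T => dist o ((w₂^T) o)) h0' h1' hstep' T hT
      exact ⟨k, hk1, fun _ => ⟨hk2, hk3⟩⟩
    · exact ⟨1, le_rfl, fun h => absurd h hp⟩
  choose Q hQ1 hQ2 using hQex
  set p₀ : ℕ := ⌈l₂⌉₊ + 1 with hp₀def
  have hp₀good : ∀ p : ℕ, l₂ ≤ dist o ((w₁^(p₀+p)) o) := by
    intro p
    have h := P1b (p₀+p)
    rw [← hl₁def] at h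
    have hfac : (1:ℝ) ≤ l₁ - 2*(B₁+3*δ) := by linarith
    have hmono : ((p₀+p : ℕ):ℝ) ≤ ((p₀+p : ℕ):ℝ) * (l₁ - 2*(B₁+3*δ)) := by
      nlinarith [Nat.cast_nonneg (α := ℝ) (p₀+p)]
    have hbig : l₂ ≤ ((p₀+p : ℕ):ℝ) := by
      have h1 : l₂ ≤ (⌈l₂⌉₊:ℝ) := Nat.le_ceil l₂
      have h2 : ⌈l₂⌉₊ ≤ p₀ + p := by rw [hp₀def]; omega
      have h3 : ((⌈l₂⌉₊:ℕ):ℝ) ≤ ((p₀+p:ℕ):ℝ) := by exact_mod_cast h2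
      linarith
    linarith
  set W : ℕ → G := fun p => (a nst)^(p₀+p) * ((e mst)^(Q (p₀+p)))⁻¹ with hWdef
  have hWcoe : ∀ p, ((W p : G) : X ≃ᵢ X) = w₁^(p₀+p) * (w₂^(Q (p₀+p)))⁻¹ := by
    intro p
    simp only [hWdef]
    push_cast
    rfl
  have hshift : ∀ (s : ℕ) (u : X), dist o ((w₁^s) u) = dist (((w₁⁻¹)^s) o) u := by
    intro s u
    have h := ((w₁^s)⁻¹).dist_eq o ((w₁^s) u)
    have h2 : ((w₁^s)⁻¹) ((w₁^s) u) = u := (w₁^s).inv_apply_self u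
    rw [h2] at h
    rw [← h, inv_pow]
  have hdisp : ∀ p, dist o ((W p : X ≃ᵢ X) o) ≤ l₂ + 2*(B₁+6*δ) := by
    intro p
    set sp := p₀ + p with hsp
    have hsp1 : 1 ≤ sp := by omega
    have hQsp := hQ2 sp (hp₀good p)
    have horb : (W p : X ≃ᵢ X) o = (w₁^sp) (((w₂^(Q sp))⁻¹) o) := by
      rw [hWcoe p]; rfl
    rw [horb, hshift]
    have hz₂ : ((w₂^(Q sp))⁻¹) o = ((w₂⁻¹)^(Q sp)) o := by rw [inv_pow]
    rw [hz₂]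
    have hde := dist_eq_gp o (((w₁⁻¹)^sp) o) (((w₂⁻¹)^(Q sp)) o)
    have hcb := hcrossback sp (Q sp) hsp1 (hQ1 sp)
    have hz1 : dist o (((w₁⁻¹)^sp) o) = dist o ((w₁^sp) o) := dist_z_eq o w₁ sp
    have hz2' : dist o (((w₂⁻¹)^(Q sp)) o) = dist o ((w₂^(Q sp)) o) := dist_z_eq o w₂ (Q sp)
    have hmineq : min (dist o ((w₁^sp) o)) (dist o ((w₂^(Q sp)) o)) =
        dist o ((w₂^(Q sp)) o) := min_eq_right hQsp.1
    rw [hmineq] at hcb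
    rw [hde, hz1, hz2']
    linarith [hQsp.2]
  -- injectivity
  have hkey : ∀ s s' : ℕ, 1 ≤ s → s < s' →
      w₁^s * (w₂^(Q s))⁻¹ ≠ w₁^s' * (w₂^(Q s'))⁻¹ := by
    intro s s' hs hss' hEq
    set Δ := s' - s with hΔdef
    have hΔ1 : 1 ≤ Δ := by omega
    have hs' : s' = s + Δ := by omega
    have hpow : w₁^Δ = (w₂^(Q s))⁻¹ * w₂^(Q s') := by
      have hEq' : w₁^s * (w₂^(Q s))⁻¹ = w₁^s * (w₁^Δ * (w₂^(Q s'))⁻¹) := by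
        rw [← mul_assoc, ← pow_add, ← hs']
        exact hEq
      have h2 : (w₂^(Q s))⁻¹ = w₁^Δ * (w₂^(Q s'))⁻¹ := mul_left_cancel hEq'
      rw [h2]
      group
    rcases lt_trichotomy (Q s) (Q s') with hQlt | hQeq | hQgt
    · set Δ' := Q s' - Q s with hΔ'def
      have hΔ'1 : 1 ≤ Δ' := by omega
      have hQs' : Q s' = Q s + Δ' := by omega
      have hpow2 : w₁^Δ = w₂^Δ' := by
        rw [hpow, hQs', pow_add, inv_mul_cancel_left]
      have horb : (w₁^Δ) o = (w₂^Δ') o := by rw [hpow2]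
      have hself : gprod o ((w₁^Δ) o) ((w₂^Δ') o) = dist o ((w₁^Δ) o) := by
        rw [← horb, gp_self]
      have hc := hcross Δ Δ' hΔ1 hΔ'1
      rw [hself] at hc
      have := hgrow₁ Δ hΔ1
      linarith
    · have hpow2 : w₁^Δ = 1 := by
        rw [hpow, hQeq, inv_mul_cancel]
      have horb : (w₁^Δ) o = o := by rw [hpow2]; rfl
      have := hgrow₁ Δ hΔ1
      rw [horb, dist_self] at this
      linarith
    · set Δ'' := Q s - Q s' with hΔ''def
      have hΔ''1 : 1 ≤ Δ'' := by omega
      have hQs : Q s = Q s' + Δ'' := by omega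
      have hpow2 : w₁^Δ = (w₂^Δ'')⁻¹ := by
        rw [hpow, hQs, pow_add]
        group
      have horb : ((w₂⁻¹)^Δ'') o = (w₁^Δ) o := by rw [inv_pow, ← hpow2]
      obtain ⟨m, hm₁, hm₂⟩ := ((P2d Δ'' hΔ''1).and (P1e Δ hΔ1)).exists
      rw [horb] at hm₁
      rw [gp_comm] at hm₂
      have := hgrow₂ Δ'' hΔ''1
      linarith
  have hinj : Function.Injective (fun p : ℕ => ((W p : G) : X ≃ᵢ X)) := by
    intro p p' h
    by_contra hne'
    simp only [hWcoe] at h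
    rcases lt_trichotomy p p' with hlt | heq | hgt
    · exact hkey (p₀+p) (p₀+p') (by omega) (by omega) h
    · exact hne' heq
    · exact hkey (p₀+p') (p₀+p) (by omega) (by omega) h.symm
  have hfin := hproper o (l₂ + 2*(B₁+6*δ))
  have hmem : ∀ p : ℕ, ((W p : G) : X ≃ᵢ X) ∈
      {g : X ≃ᵢ X | g ∈ G ∧ dist o (g o) ≤ l₂ + 2*(B₁+6*δ)} := by
    intro p
    simp only [Set.mem_setOf_eq]
    exact ⟨SetLike.coe_mem _, hdisp p⟩
  exact (Set.infinite_of_injective_forall_mem hinj hmem) hfin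

end LSD17

open LSD17

/-- duality of the limit set. -/
theorem limit_set_duality
    {X : Type*} [MetricSpace X] [ProperSpace X]
    (δ : ℝ) (hδ : 0 ≤ δ) (hhyp : IsGromovHyperbolic X δ) (hgeo : GeodesicSpace X)
    (G : Subgroup (X ≃ᵢ X)) (hproper : ProperAct G)
    (o : X)
    (htwo : ∃ a b : GromovBoundary X, a ∈ limitSet G o ∧ b ∈ limitSet G o ∧ a ≠ b) :
    ∀ ξ ∈ limitSet G o, ∀ η ∈ limitSet G o, ξ ≠ η →
      ∃ g : ℕ → G, SeqConv o (fun n => ((g n : X ≃ᵢ X)) o) ξ ∧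
        SeqConv o (fun n => ((g n : X ≃ᵢ X)⁻¹) o) η := by
  intro ξ hξ η hη hne
  obtain ⟨a, ha1, ra, hra, hJa⟩ := hξ
  obtain ⟨e, he1, rs, hrs, hJe⟩ := hη
  have hdn : Tendsto (fun n => dist o (((a n : X ≃ᵢ X))⁻¹ o)) atTop atTop := by
    have heq : (fun n => dist o (((a n : X ≃ᵢ X))⁻¹ o)) =
        fun n => dist o ((a n : X ≃ᵢ X) o) := funext fun n => dist_inv_orbit _ o
    rw [heq]; exact ha1
  have hDm : Tendsto (fun m => dist o (((e m : X ≃ᵢ X))⁻¹ o)) atTop atTop := by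
    have heq : (fun m => dist o (((e m : X ≃ᵢ X))⁻¹ o)) =
        fun m => dist o ((e m : X ≃ᵢ X) o) := funext fun m => dist_inv_orbit _ o
    rw [heq]; exact he1
  by_cases hC : ∃ v : G, ∀ B : ℝ, ∀ K : ℕ, ∃ n m : ℕ, K ≤ n ∧ K ≤ m ∧
      gprod o (((a n : X ≃ᵢ X))⁻¹ o) ((v : X ≃ᵢ X) (((e m : X ≃ᵢ X))⁻¹ o)) ≤
        min (dist o (((a n : X ≃ᵢ X))⁻¹ o)) (dist o (((e m : X ≃ᵢ X))⁻¹ o)) - B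
  · -- Case 1: construction
    obtain ⟨v, hv⟩ := hC
    set v₀ : ℝ := dist o ((v : X ≃ᵢ X) o) with hv₀def
    have hch : ∀ k : ℕ, ∃ nm : ℕ × ℕ, k ≤ nm.1 ∧ k ≤ nm.2 ∧
        gprod o (((a nm.1 : X ≃ᵢ X))⁻¹ o) ((v : X ≃ᵢ X) (((e nm.2 : X ≃ᵢ X))⁻¹ o)) ≤
          min (dist o (((a nm.1 : X ≃ᵢ X))⁻¹ o)) (dist o (((e nm.2 : X ≃ᵢ X))⁻¹ o)) -
            ((k : ℝ) + v₀ + δ + 1) := by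
      intro k
      obtain ⟨n, m, h1, h2, h3⟩ := hv ((k : ℝ) + v₀ + δ + 1) k
      exact ⟨(n, m), h1, h2, h3⟩
    choose nm hnm1 hnm2 hnm3 using hch
    refine ⟨fun k => a (nm k).1 * v * (e (nm k).2)⁻¹, ⟨ra, hra, ?_⟩, ⟨rs, hrs, ?_⟩⟩
    · rw [jt_iff]
      intro b
      obtain ⟨N, T, hNT⟩ := (jt_iff _).1 hJa (b + δ)
      refine ⟨max N ⌈b + δ⌉₊, T, fun k t hk ht => ?_⟩
      have hkN : N ≤ (nm k).1 := le_trans (le_trans (le_max_left _ _) hk) (hnm1 k)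
      have hkb : b + δ ≤ (k : ℝ) := by
        have h1 : (⌈b + δ⌉₊ : ℝ) ≤ (k : ℝ) := by
          exact_mod_cast le_trans (le_max_right N ⌈b + δ⌉₊) hk
        linarith [Nat.le_ceil (b + δ)]
      have hco : ((a (nm k).1 * v * (e (nm k).2)⁻¹ : G) : X ≃ᵢ X) o =
          (a (nm k).1 : X ≃ᵢ X) ((v : X ≃ᵢ X) (((e (nm k).2) : X ≃ᵢ X)⁻¹ o)) := by
        push_cast
        rfl
      have hL5 := gp_L5 ((a (nm k).1 : X ≃ᵢ X)) o ((v : X ≃ᵢ X) (((e (nm k).2) : X ≃ᵢ X)⁻¹ o))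
      have hminle : min (dist o (((a (nm k).1 : X ≃ᵢ X))⁻¹ o))
          (dist o (((e (nm k).2 : X ≃ᵢ X))⁻¹ o)) ≤ dist o (((a (nm k).1 : X ≃ᵢ X))⁻¹ o) :=
        min_le_left _ _
      have est1 : b + δ ≤ gprod o (((a (nm k).1 * v * (e (nm k).2)⁻¹ : G) : X ≃ᵢ X) o)
          ((a (nm k).1 : X ≃ᵢ X) o) := by
        rw [hco, hL5]
        have := hnm3 k
        have hv₀0 : 0 ≤ v₀ := dist_nonneg
        linarith
      have est2 : b + δ ≤ gprod o ((a (nm k).1 : X ≃ᵢ X) o) (ra.toFun t) :=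
        hNT (nm k).1 t hkN ht
      have hfour := four_lower hhyp est1 est2
      have : b + δ ≤ min (b + δ) (b + δ) := le_min le_rfl le_rfl
      linarith
    · rw [jt_iff]
      intro b
      obtain ⟨N, T, hNT⟩ := (jt_iff _).1 hJe (b + δ)
      refine ⟨max N ⌈b + δ⌉₊, T, fun k t hk ht => ?_⟩
      have hkN : N ≤ (nm k).2 := le_trans (le_trans (le_max_left _ _) hk) (hnm2 k)
      have hkb : b + δ ≤ (k : ℝ) := by
        have h1 : (⌈b + δ⌉₊ : ℝ) ≤ (k : ℝ) := by
          exact_mod_cast le_trans (le_max_right N ⌈b + δ⌉₊) hk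
        linarith [Nat.le_ceil (b + δ)]
      have hco : (((a (nm k).1 * v * (e (nm k).2)⁻¹ : G) : X ≃ᵢ X))⁻¹ o =
          (e (nm k).2 : X ≃ᵢ X) (((v : X ≃ᵢ X))⁻¹ (((a (nm k).1) : X ≃ᵢ X)⁻¹ o)) := by
        push_cast
        rfl
      have hL5 := gp_L5 ((e (nm k).2 : X ≃ᵢ X)) o
        (((v : X ≃ᵢ X))⁻¹ (((a (nm k).1) : X ≃ᵢ X)⁻¹ o))
      have hmap : gprod o (((e (nm k).2 : X ≃ᵢ X))⁻¹ o)
          (((v : X ≃ᵢ X))⁻¹ (((a (nm k).1) : X ≃ᵢ X)⁻¹ o)) ≤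
          gprod o (((a (nm k).1 : X ≃ᵢ X))⁻¹ o)
            ((v : X ≃ᵢ X) (((e (nm k).2 : X ≃ᵢ X))⁻¹ o)) + v₀ := by
        have h1 : gprod ((v : X ≃ᵢ X) o) ((v : X ≃ᵢ X) (((e (nm k).2 : X ≃ᵢ X))⁻¹ o))
            ((v : X ≃ᵢ X) (((v : X ≃ᵢ X))⁻¹ (((a (nm k).1) : X ≃ᵢ X)⁻¹ o))) =
            gprod o (((e (nm k).2 : X ≃ᵢ X))⁻¹ o)
              (((v : X ≃ᵢ X))⁻¹ (((a (nm k).1) : X ≃ᵢ X)⁻¹ o)) := gp_map _ _ _ _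
        rw [(v : X ≃ᵢ X).apply_inv_self] at h1
        rw [← h1]
        have h2 := gp_base ((v : X ≃ᵢ X) o) o
          ((v : X ≃ᵢ X) (((e (nm k).2 : X ≃ᵢ X))⁻¹ o)) (((a (nm k).1) : X ≃ᵢ X)⁻¹ o)
        rw [gp_comm o] at h2
        rw [dist_comm ((v : X ≃ᵢ X) o) o] at h2
        linarith [hv₀def.le, hv₀def.symm.le]
      have est1 : b + δ ≤ gprod o ((((a (nm k).1 * v * (e (nm k).2)⁻¹ : G) : X ≃ᵢ X))⁻¹ o)
          ((e (nm k).2 : X ≃ᵢ X) o) := by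
        rw [hco, hL5]
        have := hnm3 k
        have hminle : min (dist o (((a (nm k).1 : X ≃ᵢ X))⁻¹ o))
            (dist o (((e (nm k).2 : X ≃ᵢ X))⁻¹ o)) ≤
              dist o (((e (nm k).2 : X ≃ᵢ X))⁻¹ o) := min_le_right _ _
        linarith
      have est2 : b + δ ≤ gprod o ((e (nm k).2 : X ≃ᵢ X) o) (rs.toFun t) :=
        hNT (nm k).2 t hkN ht
      have hfour := four_lower hhyp est1 est2
      have : b + δ ≤ min (b + δ) (b + δ) := le_min le_rfl le_rfl
      linarith
  · -- Case 2: contradiction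
    exfalso
    have hne' : ra.pt ≠ rs.pt := by rw [hra, hrs]; exact hne
    push_neg at hC
    have hNC : ∀ v : G, ∃ B : ℝ, 0 ≤ B ∧ ∃ K : ℕ, ∀ n m : ℕ, K ≤ n → K ≤ m →
        min (dist o (((a n : X ≃ᵢ X))⁻¹ o)) (dist o (((e m : X ≃ᵢ X))⁻¹ o)) - B ≤
          gprod o (((a n : X ≃ᵢ X))⁻¹ o) ((v : X ≃ᵢ X) (((e m : X ≃ᵢ X))⁻¹ o)) := by
      intro v
      obtain ⟨B, K, hBK⟩ := hC v
      refine ⟨max B 0, le_max_right _ _, K, fun n m hn hm => ?_⟩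
      have h := hBK n m hn hm
      have := le_max_left B 0
      linarith
    exact case2_false hδ hhyp G hproper o a e ra rs hne' hdn hDm hJa hJe hNC
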